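/- Let β ∈ [0,d] and let E ⊂ S^d with Hausdorff dimension strictly less than d - β. Then there exists f ∈ L¹(S^d) such that E ⊆ {y ∈ S^d : limsup_{r→1} |P[f](ry)|·(1-r)^β = +∞}. -/

import Mathlib

open Metric Set MeasureTheory Filter
open scoped ENNReal Pointwise

/-- The Poisson kernel on the unit ball of `ℝ^{d+1}`. -/
noncomputable def poissonKernelBall (d : ℕ) (x ξ : EuclideanSpace ℝ (Fin (d + 1))) : ℝ :=
  (1 - ‖x‖ ^ 2) / ‖x - ξ‖ ^ (d + 1)

/-- The normalized surface measure on the unit sphere of `ℝ^{d+1}`. -/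
noncomputable def sphereMeasure (d : ℕ) :
    Measure (sphere (0 : EuclideanSpace ℝ (Fin (d + 1))) 1) :=
  ((volume : Measure (EuclideanSpace ℝ (Fin (d + 1)))).toSphere Set.univ)⁻¹ •
    (volume : Measure (EuclideanSpace ℝ (Fin (d + 1)))).toSphere

lemma rpow_add_le (s : ℝ) (hs : 0 < s) (a b : ℝ) (ha : 0 ≤ a) (hb : 0 ≤ b) :
    (a + b) ^ s ≤ 2 ^ s * (a ^ s + b ^ s) := by
  have hmax : a + b ≤ 2 * max a b := by
    rcases le_total a b with h | h
    · rw [max_eq_right h]; linarith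
    · rw [max_eq_left h]; linarith
  have h0 : (0:ℝ) ≤ max a b := le_max_of_le_left ha
  calc (a + b) ^ s ≤ (2 * max a b) ^ s :=
        Real.rpow_le_rpow (by positivity) hmax hs.le
    _ = 2 ^ s * (max a b) ^ s := Real.mul_rpow (by norm_num) h0
    _ ≤ 2 ^ s * (a ^ s + b ^ s) := by
        have : (max a b) ^ s ≤ a ^ s + b ^ s := by
          rcases max_cases a b with ⟨h1, _⟩ | ⟨h1, _⟩ <;> rw [h1]
          · exact le_add_of_nonneg_right (Real.rpow_nonneg hb s)
          · exact le_add_of_nonneg_left (Real.rpow_nonneg ha s)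
        have h2 : (0:ℝ) ≤ 2 ^ s := (Real.rpow_pos_of_pos (by norm_num) s).le
        nlinarith [Real.rpow_nonneg h0 s]

lemma exists_cover {X : Type*} [MetricSpace X] [MeasurableSpace X] [BorelSpace X] [Nonempty X]
    {s : ℝ} (hs : 0 < s) {E : Set X} (hH : μH[s] E = 0) {ε δ : ℝ} (hε : 0 < ε) (hδ : 0 < δ) :
    ∃ (c : ℕ → X) (ρ : ℕ → ℝ), (∀ n, 0 < ρ n) ∧ (∀ n, ρ n ≤ δ) ∧
      (E ⊆ ⋃ n, ball (c n) (ρ n)) ∧ Summable (fun n => ρ n ^ s) ∧ (∑' n, ρ n ^ s) ≤ ε := by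
  set ε₂ : ℝ := ε / (2 ^ s * 2) with hε₂def
  have h2s : (0:ℝ) < 2 ^ s := Real.rpow_pos_of_pos (by norm_num) s
  have hε₂ : 0 < ε₂ := by positivity
  -- extract a cover from the Hausdorff measure formula
  have h1 := (Measure.hausdorffMeasure_apply s E).symm.trans hH
  have h2 : (⨅ (t : ℕ → Set X) (_ : E ⊆ ⋃ n, t n)
      (_ : ∀ n, EMetric.diam (t n) ≤ ENNReal.ofReal (δ/2)),
      ∑' n, ⨆ _ : (t n).Nonempty, EMetric.diam (t n) ^ s) = 0 := by
    refine le_antisymm ?_ zero_le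
    rw [← h1]
    exact le_iSup₂ (f := fun r (_ : 0 < r) => ⨅ (t : ℕ → Set X) (_ : E ⊆ ⋃ n, t n)
      (_ : ∀ n, EMetric.diam (t n) ≤ r), ∑' n, ⨆ _ : (t n).Nonempty, EMetric.diam (t n) ^ s)
      (ENNReal.ofReal (δ/2)) (by positivity)
  have h3 : (⨅ (t : ℕ → Set X) (_ : E ⊆ ⋃ n, t n)
      (_ : ∀ n, EMetric.diam (t n) ≤ ENNReal.ofReal (δ/2)),
      ∑' n, ⨆ _ : (t n).Nonempty, EMetric.diam (t n) ^ s) < ENNReal.ofReal ε₂ := by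
    rw [h2]; exact ENNReal.ofReal_pos.mpr hε₂
  simp only [iInf_lt_iff] at h3
  obtain ⟨t, htE, htd, htsum⟩ := h3
  have hplain : ∀ n, EMetric.diam (t n) ^ s = ⨆ _ : (t n).Nonempty, EMetric.diam (t n) ^ s := by
    intro n
    by_cases h : (t n).Nonempty
    · simp [h]
    · rw [not_nonempty_iff_eq_empty] at h
      simp [h, EMetric.diam_empty, ENNReal.zero_rpow_of_pos hs]
      exact Or.inl ⟨EMetric.diam_empty, hs⟩
  have htsum' : ∑' n, EMetric.diam (t n) ^ s < ENNReal.ofReal ε₂ :=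
    lt_of_le_of_lt (le_of_eq (tsum_congr hplain)) htsum
  have hfin : ∀ n, EMetric.diam (t n) ≠ ⊤ :=
    fun n => ((htd n).trans_lt ENNReal.ofReal_lt_top).ne
  set D : ℕ → ℝ := fun n => (EMetric.diam (t n)).toReal with hD
  have hD0 : ∀ n, 0 ≤ D n := fun n => ENNReal.toReal_nonneg
  have hDδ : ∀ n, D n ≤ δ / 2 := fun n =>
    ENNReal.toReal_le_of_le_ofReal (by positivity) (htd n)
  set η : ℕ → ℝ := fun n => min ((ε₂ * (1/2) ^ (n+1)) ^ s⁻¹) (δ/2) with hη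
  have hη0 : ∀ n, 0 < η n := by
    intro n
    refine lt_min (Real.rpow_pos_of_pos (by positivity) _) (by positivity)
  have hηs : ∀ n, η n ^ s ≤ ε₂ * (1/2) ^ (n+1) := by
    intro n
    have h1 : η n ≤ (ε₂ * (1/2) ^ (n+1)) ^ s⁻¹ := min_le_left _ _
    calc η n ^ s ≤ ((ε₂ * (1/2) ^ (n+1)) ^ s⁻¹) ^ s :=
          Real.rpow_le_rpow (hη0 n).le h1 hs.le
      _ = ε₂ * (1/2) ^ (n+1) := Real.rpow_inv_rpow (by positivity) hs.ne'
  classical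
  set c : ℕ → X := fun n => if h : (t n).Nonempty then h.choose else Classical.arbitrary X with hc
  set ρ : ℕ → ℝ := fun n => D n + η n with hρ
  have hρ0 : ∀ n, 0 < ρ n := fun n => add_pos_of_nonneg_of_pos (hD0 n) (hη0 n)
  refine ⟨c, ρ, hρ0, fun n => ?_, ?_, ?_, ?_⟩
  · have := min_le_right ((ε₂ * (1/2) ^ (n+1)) ^ s⁻¹) (δ/2)
    have := hDδ n
    simp only [hρ]
    linarith
  · -- cover
    intro y hy
    obtain ⟨_, ⟨n, rfl⟩, hyn⟩ := htE hy
    have hne : (t n).Nonempty := ⟨y, hyn⟩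
    have hcn : c n ∈ t n := by
      simp only [hc, dif_pos hne]
      exact hne.choose_spec
    have h1 : edist y (c n) ≤ EMetric.diam (t n) := EMetric.edist_le_diam_of_mem hyn hcn
    have h2 : dist y (c n) ≤ D n := by
      rw [dist_edist]
      exact ENNReal.toReal_mono (hfin n) h1
    exact mem_iUnion.mpr ⟨n, by
      simp only [mem_ball]
      exact lt_of_le_of_lt h2 (by simpa [hρ] using lt_add_of_pos_right (D n) (hη0 n))⟩
  all_goals {
    have hDsum : Summable (fun n => D n ^ s) := by
      have : ∀ n, D n ^ s = (EMetric.diam (t n) ^ s).toReal := by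
        intro n; rw [← ENNReal.toReal_rpow]
      rw [funext this]
      exact ENNReal.summable_toReal (htsum'.trans ENNReal.ofReal_lt_top).ne
    have hDsum_le : (∑' n, D n ^ s) ≤ ε₂ := by
      have h1 : ∀ n, D n ^ s = (EMetric.diam (t n) ^ s).toReal := by
        intro n; rw [← ENNReal.toReal_rpow]
      rw [funext h1, ← ENNReal.tsum_toReal_eq (fun n => by
        exact ENNReal.rpow_ne_top_of_nonneg hs.le (hfin n))]
      calc (∑' n, EMetric.diam (t n) ^ s).toReal ≤ (ENNReal.ofReal ε₂).toReal :=
            ENNReal.toReal_mono ENNReal.ofReal_ne_top htsum'.le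
        _ = ε₂ := ENNReal.toReal_ofReal hε₂.le
    have hgeo : Summable (fun n : ℕ => ε₂ * (1/2:ℝ) ^ (n+1)) := by
      have h0 : ∀ n : ℕ, ε₂ * (1/2:ℝ) ^ (n+1) = (ε₂ * (1/2)) * (1/2)^n := fun n => by ring
      rw [funext h0]
      exact (summable_geometric_of_lt_one (by norm_num) (by norm_num)).mul_left _
    have hηsum : Summable (fun n => η n ^ s) :=
      hgeo.of_nonneg_of_le (fun n => Real.rpow_nonneg (hη0 n).le s) hηs
    have hηsum_le : (∑' n, η n ^ s) ≤ ε₂ := by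
      calc (∑' n, η n ^ s) ≤ ∑' n, ε₂ * (1/2:ℝ) ^ (n+1) :=
            Summable.tsum_le_tsum hηs hηsum hgeo
        _ = ε₂ * ∑' n, (1/2:ℝ) ^ (n+1) := by rw [tsum_mul_left]
        _ ≤ ε₂ * 1 := by
            gcongr
            have h0 : ∀ n : ℕ, (1/2:ℝ) ^ (n+1) = (1/2) * (1/2)^n := fun n => by ring
            rw [funext h0, tsum_mul_left, tsum_geometric_of_lt_one (by norm_num) (by norm_num)]
            norm_num
        _ = ε₂ := mul_one _
    have hbnd : ∀ n, ρ n ^ s ≤ 2 ^ s * (D n ^ s + η n ^ s) :=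
      fun n => rpow_add_le s hs (D n) (η n) (hD0 n) (hη0 n).le
    have hbsum : Summable (fun n => 2 ^ s * (D n ^ s + η n ^ s)) :=
      ((hDsum.add hηsum).mul_left _)
    have hρsum : Summable (fun n => ρ n ^ s) :=
      hbsum.of_nonneg_of_le (fun n => Real.rpow_nonneg (hρ0 n).le s) hbnd
    first
    | exact hρsum
    | calc (∑' n, ρ n ^ s) ≤ ∑' n, 2 ^ s * (D n ^ s + η n ^ s) :=
            Summable.tsum_le_tsum hbnd hρsum hbsum
        _ = 2 ^ s * ((∑' n, D n ^ s) + (∑' n, η n ^ s)) := by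
            rw [tsum_mul_left, Summable.tsum_add hDsum hηsum]
        _ ≤ 2 ^ s * (ε₂ + ε₂) := by gcongr
        _ = ε := by rw [hε₂def]; field_simp; ring
  }

lemma toSphere_open_pos (d : ℕ) (U : Set (sphere (0 : EuclideanSpace ℝ (Fin (d + 1))) 1))
    (hU : IsOpen U) (hne : U.Nonempty) :
    0 < (volume : Measure (EuclideanSpace ℝ (Fin (d + 1)))).toSphere U := by
  rw [Measure.toSphere_apply' _ hU.measurableSet]
  have hdim : (0:ℝ≥0∞) < (Module.finrank ℝ (EuclideanSpace ℝ (Fin (d + 1))) : ℝ≥0∞) := by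
    rw [finrank_euclideanSpace]
    simp
  refine ENNReal.mul_pos hdim.ne' ?_
  obtain ⟨V, hV, hUV⟩ := isOpen_induced_iff.mp hU
  obtain ⟨y₀, hy₀⟩ := hne
  set W : Set (EuclideanSpace ℝ (Fin (d + 1))) :=
    {x | 0 < ‖x‖ ∧ ‖x‖ < 1} ∩ (fun x => ‖x‖⁻¹ • x) ⁻¹' V with hW
  have hWopen : IsOpen W := by
    refine ContinuousOn.isOpen_inter_preimage ?_ ?_ hV
    · refine ContinuousOn.fun_smul ?_ continuousOn_id
      exact ((continuous_norm.continuousOn).inv₀ (fun x hx => hx.1.ne'))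
    · have : {x : EuclideanSpace ℝ (Fin (d + 1)) | 0 < ‖x‖ ∧ ‖x‖ < 1} =
          (norm ⁻¹' (Ioo 0 1)) := rfl
      rw [this]
      exact isOpen_Ioo.preimage continuous_norm
  have hy₀V : ((y₀ : EuclideanSpace ℝ (Fin (d + 1)))) ∈ V := by
    rw [← hUV] at hy₀; exact hy₀
  have hy₀n : ‖(y₀ : EuclideanSpace ℝ (Fin (d + 1)))‖ = 1 := by
    have := y₀.2; simpa [mem_sphere_iff_norm] using this
  have hWne : W.Nonempty := by
    refine ⟨(1/2 : ℝ) • (y₀ : EuclideanSpace ℝ (Fin (d + 1))), ?_, ?_⟩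
    · constructor
      · simp [norm_smul, hy₀n]
      · simp [norm_smul, hy₀n]; norm_num
    · have : ‖(1/2 : ℝ) • (y₀ : EuclideanSpace ℝ (Fin (d + 1)))‖ = 1/2 := by
        simp [norm_smul, hy₀n]
      simp only [Set.mem_preimage, this]
      rw [smul_smul]
      norm_num
      exact hy₀V
  have hWsub : W ⊆ Ioo (0:ℝ) 1 • (Subtype.val '' U) := by
    intro x hx
    obtain ⟨⟨hx0, hx1⟩, hxV⟩ := hx
    have hxn : ‖x‖ ≠ 0 := hx0.ne'
    have hunorm : ‖‖x‖⁻¹ • x‖ = 1 := by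
      rw [norm_smul]
      simp [abs_of_pos (inv_pos.mpr hx0), inv_mul_cancel₀ hxn]
    have humem : ‖x‖⁻¹ • x ∈ sphere (0 : EuclideanSpace ℝ (Fin (d + 1))) 1 := by
      simpa [mem_sphere_iff_norm] using hunorm
    refine Set.mem_smul.mpr ⟨‖x‖, ⟨hx0, hx1⟩, ‖x‖⁻¹ • x, ⟨⟨_, humem⟩, ?_, rfl⟩, ?_⟩
    · rw [← hUV]; exact hxV
    · exact smul_inv_smul₀ hxn x
  have : (0:ℝ≥0∞) < volume (Ioo (0:ℝ) 1 • (Subtype.val '' U)) :=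
    lt_of_lt_of_le (hWopen.measure_pos volume hWne) (measure_mono hWsub)
  exact this.ne'

lemma sphere_nonempty' (d : ℕ) : Nonempty (sphere (0 : EuclideanSpace ℝ (Fin (d + 1))) 1) :=
  (NormedSpace.sphere_nonempty.mpr (by norm_num)).to_subtype

lemma toSphere_univ_pos (d : ℕ) :
    (volume : Measure (EuclideanSpace ℝ (Fin (d + 1)))).toSphere Set.univ ≠ 0 := by
  have := sphere_nonempty' d
  exact (toSphere_open_pos d univ isOpen_univ univ_nonempty).ne'

lemma toSphere_univ_ne_top (d : ℕ) :
    (volume : Measure (EuclideanSpace ℝ (Fin (d + 1)))).toSphere Set.univ ≠ ⊤ :=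
  measure_ne_top _ _

lemma sphereMeasure_apply (d : ℕ) (U : Set (sphere (0 : EuclideanSpace ℝ (Fin (d + 1))) 1)) :
    sphereMeasure d U = ((volume : Measure (EuclideanSpace ℝ (Fin (d + 1)))).toSphere Set.univ)⁻¹
      * (volume : Measure (EuclideanSpace ℝ (Fin (d + 1)))).toSphere U := by
  rw [sphereMeasure, Measure.smul_apply, smul_eq_mul]

lemma sphereMeasure_pos (d : ℕ) (U : Set (sphere (0 : EuclideanSpace ℝ (Fin (d + 1))) 1))
    (hU : IsOpen U) (hne : U.Nonempty) : 0 < sphereMeasure d U := by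
  rw [sphereMeasure_apply]
  exact ENNReal.mul_pos (ENNReal.inv_ne_zero.mpr (toSphere_univ_ne_top d))
    (toSphere_open_pos d U hU hne).ne'

lemma sphereMeasure_ne_top (d : ℕ) (U : Set (sphere (0 : EuclideanSpace ℝ (Fin (d + 1))) 1)) :
    sphereMeasure d U ≠ ⊤ := by
  rw [sphereMeasure_apply]
  exact ENNReal.mul_ne_top (ENNReal.inv_ne_top.mpr (toSphere_univ_pos d))
    (measure_ne_top _ _)

instance (d : ℕ) : IsFiniteMeasure (sphereMeasure d) :=
  ⟨lt_top_iff_ne_top.mpr (sphereMeasure_ne_top d univ)⟩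

theorem exists_integrable_of_dimH_lt (d : ℕ) (β : ℝ) (hβ : β ∈ Icc (0 : ℝ) d)
    (E : Set (sphere (0 : EuclideanSpace ℝ (Fin (d + 1))) 1))
    (hE : dimH E < ENNReal.ofReal (d - β)) :
    ∃ f : sphere (0 : EuclideanSpace ℝ (Fin (d + 1))) 1 → ℝ,
      Integrable f (sphereMeasure d) ∧
      E ⊆ {y : sphere (0 : EuclideanSpace ℝ (Fin (d + 1))) 1 |
        ∀ M : ℝ, ∃ᶠ r in nhdsWithin (1 : ℝ) (Iio 1),
          M < |∫ ξ, poissonKernelBall d (r • (y : EuclideanSpace ℝ (Fin (d + 1)))) ξ * f ξ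
                  ∂(sphereMeasure d)| * Real.rpow (1 - r) β} := by
  classical
  have hne := sphere_nonempty' d
  -- the exponent is positive
  have hsβ : 0 < (d : ℝ) - β := by
    rcases lt_or_eq_of_le hβ.2 with h | h
    · linarith
    · exfalso; rw [← h] at hE; simp at hE
  set s : ℝ := (d : ℝ) - β with hsdef
  -- Hausdorff measure vanishes
  have hH : μH[s] E = 0 := by
    have h := hausdorffMeasure_of_dimH_lt (d := s.toNNReal) (s := E) (by exact hE)
    rwa [Real.coe_toNNReal _ hsβ.le] at h
  -- choose covers
  have hcovers : ∀ n : ℕ, ∃ (c : ℕ → (sphere (0 : EuclideanSpace ℝ (Fin (d + 1))) 1)) (ρ : ℕ → ℝ), (∀ i, 0 < ρ i) ∧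
      (∀ i, ρ i ≤ min (1/((n:ℝ)+1)) (1/2)) ∧ (E ⊆ ⋃ i, ball (c i) (ρ i)) ∧
      Summable (fun i => ρ i ^ s) ∧ (∑' i, ρ i ^ s) ≤ (1/2:ℝ)^n / ((n:ℝ)+1) := by
    intro n
    exact exists_cover hsβ hH (by positivity) (by positivity)
  choose c ρ hρ0 hρδ hcov hsum htsum using hcovers
  -- the caps and weights
  set B : ℕ → ℕ → Set (sphere (0 : EuclideanSpace ℝ (Fin (d + 1))) 1) := fun n i => ball (c n i) (ρ n i) with hBdef
  have hBmeas : ∀ n i, MeasurableSet (B n i) := fun n i => measurableSet_ball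
  have hB0 : ∀ n i, 0 < (sphereMeasure d) (B n i) := fun n i =>
    sphereMeasure_pos d _ isOpen_ball ⟨c n i, mem_ball_self (hρ0 n i)⟩
  have hBtop : ∀ n i, (sphereMeasure d) (B n i) ≠ ⊤ := fun n i => sphereMeasure_ne_top d _
  have hBr : ∀ n i, 0 < ((sphereMeasure d) (B n i)).toReal :=
    fun n i => ENNReal.toReal_pos (hB0 n i).ne' (hBtop n i)
  set a : ℕ → ℕ → ℝ := fun n i => ((n:ℝ)+1) * ρ n i ^ s / ((sphereMeasure d) (B n i)).toReal with hadef
  have ha0 : ∀ n i, 0 < a n i := fun n i => by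
    have := hρ0 n i; have := hBr n i
    have : (0:ℝ) < ρ n i ^ s := Real.rpow_pos_of_pos (hρ0 n i) s
    positivity
  set g : ℕ × ℕ → (sphere (0 : EuclideanSpace ℝ (Fin (d + 1))) 1) → ℝ := fun k ξ => (B k.1 k.2).indicator (fun _ => a k.1 k.2) ξ with hgdef
  have hg0 : ∀ k ξ, 0 ≤ g k ξ := fun k ξ => Set.indicator_nonneg (fun _ _ => (ha0 _ _).le) ξ
  have hgmeas : ∀ k, Measurable (g k) := fun k =>
    measurable_const.indicator (hBmeas k.1 k.2)
  set F : (sphere (0 : EuclideanSpace ℝ (Fin (d + 1))) 1) → ℝ≥0∞ := fun ξ => ∑' k : ℕ × ℕ, ENNReal.ofReal (g k ξ) with hFdef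
  have hFmeas : Measurable F :=
    Measurable.ennreal_tsum (fun k => (hgmeas k).ennreal_ofReal)
  set f : (sphere (0 : EuclideanSpace ℝ (Fin (d + 1))) 1) → ℝ := fun ξ => (F ξ).toReal with hfdef
  have hfmeas : Measurable f := hFmeas.ennreal_toReal
  have hf0 : ∀ ξ, 0 ≤ f ξ := fun ξ => ENNReal.toReal_nonneg
  -- lintegral of each g
  have hgint : ∀ k : ℕ × ℕ, ∫⁻ ξ, ENNReal.ofReal (g k ξ) ∂(sphereMeasure d)
      = ENNReal.ofReal (((k.1:ℝ)+1) * ρ k.1 k.2 ^ s) := by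
    rintro ⟨n, i⟩
    have h1 : (fun ξ => ENNReal.ofReal (g (n, i) ξ))
        = (B n i).indicator (fun _ => ENNReal.ofReal (a n i)) := by
      funext ξ; by_cases h : ξ ∈ B n i <;> simp [hgdef, h]
    rw [h1, lintegral_indicator_const (hBmeas n i)]
    rw [hadef]
    rw [ENNReal.ofReal_div_of_pos (hBr n i), ENNReal.ofReal_toReal (hBtop n i)]
    exact ENNReal.div_mul_cancel (hB0 n i).ne' (hBtop n i)
  -- total mass bound
  have hFlint : ∫⁻ ξ, F ξ ∂(sphereMeasure d) ≤ ENNReal.ofReal 2 := by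
    rw [hFdef]
    simp only
    rw [lintegral_tsum (fun k => ((hgmeas k).ennreal_ofReal).aemeasurable)]
    rw [tsum_congr hgint]
    rw [ENNReal.tsum_prod (f := fun (n i : ℕ) => ENNReal.ofReal (((n:ℝ)+1) * ρ n i ^ s))]
    have hinner : ∀ n : ℕ, (∑' i, ENNReal.ofReal (((n:ℝ)+1) * ρ n i ^ s))
        ≤ ENNReal.ofReal ((1/2:ℝ)^n) := by
      intro n
      rw [← ENNReal.ofReal_tsum_of_nonneg
        (fun i => by have h1 := (Real.rpow_pos_of_pos (hρ0 n i) s).le; positivity)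
        ((hsum n).mul_left _)]
      apply ENNReal.ofReal_le_ofReal
      rw [tsum_mul_left]
      calc ((n:ℝ)+1) * ∑' i, ρ n i ^ s ≤ ((n:ℝ)+1) * ((1/2:ℝ)^n / ((n:ℝ)+1)) :=
            mul_le_mul_of_nonneg_left (htsum n) (by positivity)
        _ = (1/2:ℝ)^n := by field_simp
    calc ∑' (n : ℕ), (∑' (i : ℕ), ENNReal.ofReal (((n:ℝ)+1) * ρ n i ^ s))
        ≤ ∑' n : ℕ, ENNReal.ofReal ((1/2:ℝ)^n) := Summable.tsum_le_tsum hinner ENNReal.summable ENNReal.summable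
      _ = ENNReal.ofReal (∑' n : ℕ, (1/2:ℝ)^n) := by
          rw [← ENNReal.ofReal_tsum_of_nonneg (fun n => by positivity)
            (summable_geometric_of_lt_one (by norm_num) (by norm_num))]
      _ = ENNReal.ofReal 2 := by
          rw [tsum_geometric_of_lt_one (by norm_num) (by norm_num)]; norm_num
  have hFtop : ∫⁻ ξ, F ξ ∂(sphereMeasure d) ≠ ⊤ := (hFlint.trans_lt ENNReal.ofReal_lt_top).ne
  -- integrability of f
  have hfint : Integrable f (sphereMeasure d) := by
    refine ⟨hfmeas.aestronglyMeasurable, ?_⟩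
    rw [hasFiniteIntegral_iff_norm]
    calc ∫⁻ ξ, ENNReal.ofReal ‖f ξ‖ ∂(sphereMeasure d) ≤ ∫⁻ ξ, F ξ ∂(sphereMeasure d) := by
          apply lintegral_mono
          intro ξ
          calc ENNReal.ofReal ‖f ξ‖ = ENNReal.ofReal ((F ξ).toReal) := by
                rw [Real.norm_of_nonneg (hf0 ξ)]
            _ ≤ F ξ := ENNReal.ofReal_toReal_le
      _ < ⊤ := lt_of_le_of_lt hFlint ENNReal.ofReal_lt_top
  -- pointwise lower bound a.e.
  have hFae : ∀ᵐ ξ ∂(sphereMeasure d), F ξ ≠ ⊤ := by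
    filter_upwards [ae_lt_top hFmeas hFtop] with ξ h using h.ne
  have hflow : ∀ k : ℕ × ℕ, ∀ᵐ ξ ∂(sphereMeasure d), g k ξ ≤ f ξ := by
    intro k
    filter_upwards [hFae] with ξ h
    have h1 : ENNReal.ofReal (g k ξ) ≤ F ξ := ENNReal.le_tsum k
    have h2 := ENNReal.toReal_mono h h1
    rwa [ENNReal.toReal_ofReal (hg0 k ξ)] at h2
  refine ⟨f, hfint, ?_⟩
  -- main inclusion
  intro y hy M
  rw [frequently_iff]
  intro U hU
  obtain ⟨l, hl, hIoo⟩ := mem_nhdsLT_iff_exists_Ioo_subset.mp hU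
  have hl1 : (0:ℝ) < 1 - l := by simp only [Set.mem_Iio] at hl; linarith
  -- choose the level n
  obtain ⟨n, hn⟩ := exists_nat_gt (max (M * 3^(d+1)) (1/(1-l)))
  have hn1 : M * 3^(d+1) < (n:ℝ) + 1 := lt_of_le_of_lt (le_max_left _ _) (by linarith)
  have hn2 : 1/((n:ℝ)+1) < 1 - l := by
    rw [div_lt_iff₀ (by positivity)]
    have h2 : 1/(1-l) < (n:ℝ) := lt_of_le_of_lt (le_max_right _ _) hn
    rw [div_lt_iff₀ hl1] at h2
    nlinarith
  -- the cap containing y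
  obtain ⟨_, ⟨i, rfl⟩, hyB⟩ := hcov n hy
  set ρ₀ : ℝ := ρ n i with hρ₀def
  have hρ₀ : 0 < ρ₀ := hρ0 n i
  have hρhalf : ρ₀ ≤ 1/2 := (hρδ n i).trans (min_le_right _ _)
  have hρn : ρ₀ < 1 - l := lt_of_le_of_lt ((hρδ n i).trans (min_le_left _ _)) hn2
  set r : ℝ := 1 - ρ₀ with hrdef
  have hr0 : 0 < r := by rw [hrdef]; linarith
  have hr1 : r < 1 := by rw [hrdef]; linarith
  refine ⟨r, hIoo ⟨by rw [hrdef]; linarith, hr1⟩, ?_⟩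
  -- the point inside the ball
  set x : EuclideanSpace ℝ (Fin (d + 1)) := r • (y : EuclideanSpace ℝ (Fin (d + 1))) with hxdef
  have hynorm : ‖(y : EuclideanSpace ℝ (Fin (d + 1)))‖ = 1 := by
    have := y.2; simpa [mem_sphere_iff_norm] using this
  have hxnorm : ‖x‖ = r := by
    rw [hxdef, norm_smul, hynorm, Real.norm_of_nonneg hr0.le, mul_one]
  have hdenom : ∀ ξ : (sphere (0 : EuclideanSpace ℝ (Fin (d + 1))) 1), ρ₀ ≤ ‖x - (ξ : EuclideanSpace ℝ (Fin (d + 1)))‖ := by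
    intro ξ
    have hξn : ‖(ξ : EuclideanSpace ℝ (Fin (d + 1)))‖ = 1 := by
      have := ξ.2; simpa [mem_sphere_iff_norm] using this
    have h1 : ‖(ξ : EuclideanSpace ℝ (Fin (d + 1)))‖ - ‖x‖ ≤ ‖x - (ξ : EuclideanSpace ℝ (Fin (d + 1)))‖ := by
      rw [norm_sub_rev]
      exact norm_sub_norm_le _ _
    rw [hξn, hxnorm] at h1
    rw [hrdef] at h1; linarith
  set K : (sphere (0 : EuclideanSpace ℝ (Fin (d + 1))) 1) → ℝ := fun ξ => poissonKernelBall d x ξ with hKdef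
  have hKnonneg : ∀ ξ, 0 ≤ K ξ := by
    intro ξ
    rw [hKdef]
    unfold poissonKernelBall
    apply div_nonneg
    · rw [hxnorm]; nlinarith
    · positivity
  have hKle : ∀ ξ, K ξ ≤ 1 / ρ₀^(d+1) := by
    intro ξ
    rw [hKdef]
    unfold poissonKernelBall
    apply div_le_div₀ (by norm_num)
    · rw [hxnorm]; nlinarith
    · positivity
    · exact pow_le_pow_left₀ hρ₀.le (hdenom ξ) _
  have hKcont : Continuous K := by
    rw [hKdef]
    unfold poissonKernelBall
    refine continuous_const.div ?_ ?_
    · exact ((continuous_const.sub continuous_subtype_val).norm.pow _)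
    · intro ξ
      exact pow_ne_zero _ (lt_of_lt_of_le hρ₀ (hdenom ξ)).ne'
  -- lower bound for the kernel on the cap
  set κ : ℝ := ρ₀ / (3*ρ₀)^(d+1) with hκdef
  have hκK : ∀ ξ ∈ B n i, κ ≤ K ξ := by
    intro ξ hξ
    have hdist : dist (y : EuclideanSpace ℝ (Fin (d + 1))) (ξ : EuclideanSpace ℝ (Fin (d + 1))) < 2 * ρ₀ := by
      have h1 : dist y (c n i) < ρ₀ := mem_ball.mp hyB
      have h2 : dist ξ (c n i) < ρ₀ := mem_ball.mp hξ
      have h3 : dist y ξ ≤ dist y (c n i) + dist (c n i) ξ := dist_triangle _ _ _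
      have h4 : dist (c n i) ξ = dist ξ (c n i) := dist_comm _ _
      have h5 : dist (y : EuclideanSpace ℝ (Fin (d + 1))) (ξ : EuclideanSpace ℝ (Fin (d + 1))) = dist y ξ := rfl
      rw [h5]; linarith
    have hxy : ‖x - (y : EuclideanSpace ℝ (Fin (d + 1)))‖ = ρ₀ := by
      have h0 : x - (y : EuclideanSpace ℝ (Fin (d + 1))) = (-ρ₀) • (y : EuclideanSpace ℝ (Fin (d + 1))) := by
        rw [hxdef, hrdef, sub_smul, one_smul, neg_smul]
        abel
      rw [h0, norm_smul, hynorm, mul_one, Real.norm_eq_abs, abs_neg, abs_of_pos hρ₀]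
    have hxd : ‖x - (ξ : EuclideanSpace ℝ (Fin (d + 1)))‖ ≤ 3 * ρ₀ := by
      have h1 : x - (ξ : EuclideanSpace ℝ (Fin (d + 1)))
          = (x - (y : EuclideanSpace ℝ (Fin (d + 1)))) + ((y : EuclideanSpace ℝ (Fin (d + 1))) - ξ) := by abel
      have h2 := norm_add_le (x - (y : EuclideanSpace ℝ (Fin (d + 1)))) ((y : EuclideanSpace ℝ (Fin (d + 1))) - (ξ : EuclideanSpace ℝ (Fin (d + 1))))
      rw [← h1, hxy] at h2
      have h3 : ‖(y : EuclideanSpace ℝ (Fin (d + 1))) - (ξ : EuclideanSpace ℝ (Fin (d + 1)))‖ < 2 * ρ₀ := by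
        rw [← dist_eq_norm]; exact hdist
      linarith
    rw [hKdef]
    unfold poissonKernelBall
    apply div_le_div₀
    · rw [hxnorm]; nlinarith
    · rw [hxnorm, hrdef]; nlinarith
    · exact pow_pos (lt_of_lt_of_le hρ₀ (hdenom ξ)) _
    · exact pow_le_pow_left₀ (norm_nonneg _) hxd _
  -- integrability of the products
  have haesm : AEStronglyMeasurable (fun ξ => K ξ * f ξ) (sphereMeasure d) :=
    hKcont.aestronglyMeasurable.mul hfmeas.aestronglyMeasurable
  have hKf_int : Integrable (fun ξ => K ξ * f ξ) (sphereMeasure d) := by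
    refine Integrable.mono' (hfint.const_mul (1/ρ₀^(d+1))) haesm ?_
    filter_upwards with ξ
    rw [Real.norm_of_nonneg (mul_nonneg (hKnonneg ξ) (hf0 ξ))]
    exact mul_le_mul_of_nonneg_right (hKle ξ) (hf0 ξ)
  have hgk_int : Integrable (g (n, i)) (sphereMeasure d) := by
    rw [hgdef]
    exact (integrable_const _).indicator (hBmeas n i)
  have hKg_int : Integrable (fun ξ => K ξ * g (n, i) ξ) (sphereMeasure d) := by
    refine Integrable.mono' (hgk_int.const_mul (1/ρ₀^(d+1)))
      (hKcont.aestronglyMeasurable.mul hgk_int.aestronglyMeasurable) ?_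
    filter_upwards with ξ
    rw [Real.norm_of_nonneg (mul_nonneg (hKnonneg ξ) (hg0 (n, i) ξ))]
    exact mul_le_mul_of_nonneg_right (hKle ξ) (hg0 (n, i) ξ)
  -- the chain of inequalities
  have step1 : ∫ ξ, K ξ * g (n, i) ξ ∂(sphereMeasure d) ≤ ∫ ξ, K ξ * f ξ ∂(sphereMeasure d) := by
    refine integral_mono_ae hKg_int hKf_int ?_
    filter_upwards [hflow (n, i)] with ξ h
    exact mul_le_mul_of_nonneg_left h (hKnonneg ξ)
  have step2 : κ * (((n:ℝ)+1) * ρ₀ ^ s) ≤ ∫ ξ, K ξ * g (n, i) ξ ∂(sphereMeasure d) := by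
    have h1 : ∫ ξ, κ * g (n, i) ξ ∂(sphereMeasure d) ≤ ∫ ξ, K ξ * g (n, i) ξ ∂(sphereMeasure d) := by
      refine integral_mono (hgk_int.const_mul κ) hKg_int ?_
      intro ξ
      by_cases h : ξ ∈ B n i
      · have hgval : g (n, i) ξ = a n i := by simp [hgdef, h]
        simp only [hgval]
        exact mul_le_mul_of_nonneg_right (hκK ξ h) (ha0 n i).le
      · have hgval : g (n, i) ξ = 0 := by simp [hgdef, h]
        simp only [hgval, mul_zero]
        exact le_rfl
    have h2 : ∫ ξ, κ * g (n, i) ξ ∂(sphereMeasure d) = κ * (((n:ℝ)+1) * ρ₀ ^ s) := by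
      rw [integral_const_mul]
      congr 1
      rw [hgdef]
      simp only
      rw [integral_indicator_const _ (hBmeas n i), smul_eq_mul, hadef]
      rw [mul_comm, div_mul_eq_mul_div, mul_div_assoc, measureReal_def, div_self (hBr n i).ne', mul_one]
    rw [← h2]; exact h1
  have hβ0 : (0:ℝ) ≤ β := hβ.1
  have hrpow : Real.rpow (1 - r) β = ρ₀ ^ β := by
    rw [hrdef]; norm_num
  have hval : κ * (((n:ℝ)+1) * ρ₀ ^ s) * ρ₀ ^ β = ((n:ℝ)+1) / 3^(d+1) := by
    have hpows : ρ₀ * ρ₀ ^ s * ρ₀ ^ β = ρ₀ ^ (d+1 : ℕ) := by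
      have h1 : ρ₀ * ρ₀ ^ s * ρ₀ ^ β = ρ₀ ^ ((1:ℝ) + s + β) := by
        rw [Real.rpow_add hρ₀, Real.rpow_add hρ₀, Real.rpow_one]
      have h2 : ((1:ℝ) + s + β) = ((d+1 : ℕ) : ℝ) := by
        rw [hsdef]; push_cast; ring
      rw [h1, h2, Real.rpow_natCast]
    have h3 : (0:ℝ) < ρ₀ ^ (d+1 : ℕ) := by positivity
    rw [hκdef, mul_pow]
    calc ρ₀ / (3^(d+1) * ρ₀^(d+1)) * (((n:ℝ)+1) * ρ₀ ^ s) * ρ₀ ^ β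
        = ((n:ℝ)+1) * (ρ₀ * ρ₀^s * ρ₀^β) / (3^(d+1) * ρ₀^(d+1)) := by ring
      _ = ((n:ℝ)+1) * ρ₀^(d+1:ℕ) / (3^(d+1) * ρ₀^(d+1:ℕ)) := by rw [hpows]
      _ = ((n:ℝ)+1) / 3^(d+1) := mul_div_mul_right _ _ h3.ne'
  have hIlow : κ * (((n:ℝ)+1) * ρ₀ ^ s) ≤ ∫ ξ, K ξ * f ξ ∂(sphereMeasure d) := step2.trans step1
  have hMval : M < ((n:ℝ)+1) / 3^(d+1) := by
    rw [lt_div_iff₀ (by positivity)]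
    exact hn1
  calc M < ((n:ℝ)+1) / 3^(d+1) := hMval
    _ = κ * (((n:ℝ)+1) * ρ₀ ^ s) * ρ₀ ^ β := hval.symm
    _ ≤ (∫ ξ, K ξ * f ξ ∂(sphereMeasure d)) * ρ₀ ^ β :=
        mul_le_mul_of_nonneg_right hIlow (Real.rpow_nonneg hρ₀.le β)
    _ ≤ |∫ ξ, K ξ * f ξ ∂(sphereMeasure d)| * ρ₀ ^ β :=
        mul_le_mul_of_nonneg_right (le_abs_self _) (Real.rpow_nonneg hρ₀.le β)
    _ = |∫ ξ, poissonKernelBall d (r • (y : EuclideanSpace ℝ (Fin (d + 1)))) ξ * f ξ ∂(sphereMeasure d)| * Real.rpow (1 - r) β := by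
        rw [hrpow]
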